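/- Let σ : E → E be the shift operation defined by (σf)(i) = f(i−1) for all i ∈ ℤ, and for X ⊆ E let σX = {σf : f ∈ X}. If A_X is a benign subgroup of the free group F of rank 3, then A_{σX} is a benign subgroup of F. -/

import Mathlib

/-!
STATEMENT 12: Let `σ : E → E` be the shift `(σf)(i) = f(i−1)` and `σX = {σf : f ∈ X}`.
If `A_X` is a benign subgroup of the free group `F` of rank 3, then so is `A_{σX}`.
-/

noncomputable section

/-- The free group `F` of rank 3 on the generators `a, b, c`. -/
abbrev F3 := FreeGroup (Fin 3)

def aF : F3 := FreeGroup.of 0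
def bF : F3 := FreeGroup.of 1
def cF : F3 := FreeGroup.of 2

/-- `b_i = c⁻ⁱ b cⁱ`. -/
def bIdx (i : ℤ) : F3 := cF ^ (-i) * bF * cF ^ i

/-- `b_f = ∏ b_i^{f(i)}`, the product over the support of `f` in increasing order of `i`. -/
def bW (f : ℤ →₀ ℤ) : F3 :=
  ((f.support.sort (· ≤ ·)).map fun i => bIdx i ^ f i).prod

/-- `a_f = b_f⁻¹ a b_f`. -/
def aW (f : ℤ →₀ ℤ) : F3 := (bW f)⁻¹ * aF * bW f

/-- `A_X = ⟨a_f : f ∈ X⟩ ≤ F`. -/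
def AX (X : Set (ℤ →₀ ℤ)) : Subgroup F3 := Subgroup.closure (aW '' X)

/-- `H` is a benign subgroup of `G`: there are a finitely presented group `K`
(a presented group on finitely many generators with finitely many relators), an injective
homomorphism `φ : G → K` and a finitely generated subgroup `L ≤ K` with `φ(G) ∩ L = φ(H)`. -/
def Benign {G : Type*} [Group G] (H : Subgroup G) : Prop :=
  ∃ (n : ℕ) (rels : Set (FreeGroup (Fin n))) (φ : G →* PresentedGroup rels)
    (L : Subgroup (PresentedGroup rels)),
    rels.Finite ∧ Function.Injective φ ∧ L.FG ∧
      Subgroup.map φ ⊤ ⊓ L = Subgroup.map φ H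

/-- `σX = {σf : f ∈ X}` where `(σf)(i) = f(i−1)`. -/
def sigmaSet (X : Set (ℤ →₀ ℤ)) : Set (ℤ →₀ ℤ) :=
  {g | ∃ f ∈ X, ∀ i : ℤ, g i = f (i - 1)}

/-! ### Auxiliary material -/

/-- The shift `(σf)(i) = f(i-1)`. -/
def shiftE (f : ℤ →₀ ℤ) : ℤ →₀ ℤ := Finsupp.equivMapDomain (Equiv.addRight (1 : ℤ)) f

lemma shiftE_apply (f : ℤ →₀ ℤ) (i : ℤ) : shiftE f i = f (i - 1) := by
  simp [shiftE, Finsupp.equivMapDomain_apply, sub_eq_add_neg]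

def fwdHom : F3 →* F3 := FreeGroup.lift (fun i => ![aF, cF⁻¹ * bF * cF, cF] i)
def bwdHom : F3 →* F3 := FreeGroup.lift (fun i => ![aF, cF * bF * cF⁻¹, cF] i)

lemma comp_bwd_fwd : bwdHom.comp fwdHom = MonoidHom.id F3 := by
  apply FreeGroup.ext_hom; intro x
  fin_cases x <;> simp [fwdHom, bwdHom, aF, bF, cF] <;> group

lemma comp_fwd_bwd : fwdHom.comp bwdHom = MonoidHom.id F3 := by
  apply FreeGroup.ext_hom; intro x
  fin_cases x <;> simp [fwdHom, bwdHom, aF, bF, cF] <;> group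

/-- The automorphism `a ↦ a`, `b ↦ c⁻¹ b c`, `c ↦ c` of `F3`. -/
def shiftAut : F3 ≃* F3 := MonoidHom.toMulEquiv fwdHom bwdHom comp_bwd_fwd comp_fwd_bwd

lemma shiftAut_coe (x : F3) : shiftAut x = fwdHom x := rfl

lemma fwd_aF : fwdHom aF = aF := by simp [fwdHom, aF]
lemma fwd_bF : fwdHom bF = cF⁻¹ * bF * cF := by simp [fwdHom, bF]
lemma fwd_cF : fwdHom cF = cF := by simp [fwdHom, cF]

lemma fwd_bIdx (i : ℤ) : fwdHom (bIdx i) = bIdx (i + 1) := by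
  simp only [bIdx, map_mul, map_zpow, fwd_bF, fwd_cF, neg_add]
  group

lemma sort_map_add_one (s : Finset ℤ) :
    (s.map (Equiv.addRight (1 : ℤ)).toEmbedding).sort (· ≤ ·) =
      (s.sort (· ≤ ·)).map (· + 1) := by
  refine (fun hp h1 h2 => List.Perm.eq_of_pairwise' (r := (· ≤ ·)) h1 h2 hp) ?_ ?_ ?_
  · rw [← Multiset.coe_eq_coe, Finset.sort_eq, Finset.map_val,
      ← Finset.sort_eq s (· ≤ ·), Multiset.map_coe]
    rfl
  · exact Finset.pairwise_sort _ _
  · exact List.Pairwise.map _ (fun a b h => by omega) (Finset.pairwise_sort s _)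

lemma bW_shift (f : ℤ →₀ ℤ) : bW (shiftE f) = fwdHom (bW f) := by
  have hs : (shiftE f).support = f.support.map (Equiv.addRight (1 : ℤ)).toEmbedding := rfl
  rw [bW, bW, map_list_prod, List.map_map, hs, sort_map_add_one, List.map_map]
  refine congrArg List.prod (List.map_congr_left fun j _ => ?_)
  simp only [Function.comp_apply, fwd_bIdx, map_zpow, shiftE_apply]
  norm_num

lemma aW_shift (f : ℤ →₀ ℤ) : aW (shiftE f) = fwdHom (aW f) := by
  simp [aW, map_mul, map_inv, fwd_aF, bW_shift]

lemma sigmaSet_eq (X : Set (ℤ →₀ ℤ)) : sigmaSet X = shiftE '' X := by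
  ext g
  constructor
  · rintro ⟨f, hf, hg⟩
    exact ⟨f, hf, by ext i; rw [shiftE_apply, ← hg i]⟩
  · rintro ⟨f, hf, rfl⟩
    exact ⟨f, hf, fun i => shiftE_apply f i⟩

lemma AX_sigma (X : Set (ℤ →₀ ℤ)) :
    AX (sigmaSet X) = (AX X).map shiftAut.toMonoidHom := by
  rw [AX, AX, MonoidHom.map_closure]
  congr 1
  rw [sigmaSet_eq, Set.image_image, Set.image_image]
  have : (fun x : ℤ →₀ ℤ => aW (shiftE x)) =
      (fun x : ℤ →₀ ℤ => shiftAut.toMonoidHom (aW x)) := funext fun f => aW_shift f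
  rw [this]

/-- If `A_X` is benign in `F`, then so is `A_{σX}`. -/
theorem stmt12 (X : Set (ℤ →₀ ℤ)) (h : Benign (AX X)) : Benign (AX (sigmaSet X)) := by
  obtain ⟨n, rels, φ, L, hfin, hinj, hFG, heq⟩ := h
  refine ⟨n, rels, φ.comp shiftAut.symm.toMonoidHom, L, hfin,
    hinj.comp shiftAut.symm.injective, hFG, ?_⟩
  have hid : (shiftAut.symm.toMonoidHom.comp shiftAut.toMonoidHom) = MonoidHom.id F3 := by
    ext x; simp
  have h1 : Subgroup.map (φ.comp shiftAut.symm.toMonoidHom) ⊤ = Subgroup.map φ ⊤ := by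
    rw [← Subgroup.map_map,
      Subgroup.map_top_of_surjective shiftAut.symm.toMonoidHom shiftAut.symm.surjective]
  have h2 : Subgroup.map (φ.comp shiftAut.symm.toMonoidHom) (AX (sigmaSet X)) =
      Subgroup.map φ (AX X) := by
    rw [AX_sigma, Subgroup.map_map, MonoidHom.comp_assoc, hid, MonoidHom.comp_id]
  rw [h1, h2, heq]
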